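/- If condition (H1) is satisfied, then the linear Hammerstein operator L has a positive eigenvalue λ₁ > 0 whose corresponding eigenfunction φ₁ is nonnegative on [0,1] and not identically zero. -/

import Mathlib

open MeasureTheory unitInterval Set
open scoped ENNReal

lemma unitInterval_open_pos {U : Set unitInterval} (hU : IsOpen U) (hne : U.Nonempty) :
    0 < (volume : Measure unitInterval) U := by
  obtain ⟨x₀, hx₀⟩ := hne
  rw [unitInterval.volume_def, comap_subtype_coe_apply measurableSet_Icc]
  obtain ⟨ε, hε, hball⟩ := Metric.isOpen_iff.1 hU x₀ hx₀
  set a : ℝ := max ((x₀ : ℝ) - ε/2) 0 with ha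
  set b : ℝ := min ((x₀ : ℝ) + ε/2) 1 with hb
  have hx1 := x₀.2.1; have hx2 := x₀.2.2
  have hab : a < b := by
    simp only [ha, hb, max_lt_iff, lt_min_iff]
    refine ⟨⟨by nlinarith, by nlinarith⟩, ⟨by nlinarith, by nlinarith⟩⟩
  have hsub : Ioo a b ⊆ Subtype.val '' U := by
    intro y hy
    have hy01 : y ∈ Icc (0:ℝ) 1 :=
      ⟨le_trans (le_max_right _ _) hy.1.le, le_trans hy.2.le (min_le_right _ _)⟩
    refine ⟨⟨y, hy01⟩, hball ?_, rfl⟩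
    rw [Metric.mem_ball]
    have hd : dist (⟨y, hy01⟩ : unitInterval) x₀ = |y - (x₀:ℝ)| := rfl
    rw [hd, abs_sub_lt_iff]
    have h1 : (x₀:ℝ) - ε/2 ≤ a := le_max_left _ _
    have h2 : b ≤ (x₀:ℝ) + ε/2 := min_le_left _ _
    exact ⟨by nlinarith [hy.1, hy.2], by nlinarith [hy.1, hy.2]⟩
  calc (0:ℝ≥0∞) < volume (Ioo a b) := by
        rw [Real.volume_Ioo]; exact ENNReal.ofReal_pos.2 (by linarith)
    _ ≤ volume (Subtype.val '' U) := measure_mono hsub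

lemma cm_integrable (f : C(unitInterval, ℝ)) : Integrable f :=
  f.continuous.integrable_of_hasCompactSupport (HasCompactSupport.of_compactSpace _)

lemma integral_pos_of_pos_at {f : C(unitInterval, ℝ)} (hf : ∀ t, 0 ≤ f t)
    {t₀ : unitInterval} (ht₀ : 0 < f t₀) : 0 < ∫ t, f t := by
  rw [integral_pos_iff_support_of_nonneg hf (cm_integrable f)]
  have : IsOpen (Function.support f) := by
    have : Function.support f = f ⁻¹' {0}ᶜ := rfl
    rw [this]; exact (isClosed_singleton.preimage f.continuous).isOpen_compl
  exact unitInterval_open_pos this ⟨t₀, ht₀.ne'⟩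

noncomputable def ip (u v : C(unitInterval, ℝ)) : ℝ := ∫ t, u t * v t

lemma ip_comm (u v : C(unitInterval, ℝ)) : ip u v = ip v u := by
  unfold ip; simp_rw [mul_comm]

lemma cm_integrable_mul (u v : C(unitInterval, ℝ)) :
    Integrable (fun t => u t * v t) := cm_integrable (u * v)

lemma ip_add_left (u v w : C(unitInterval, ℝ)) : ip (u + v) w = ip u w + ip v w := by
  unfold ip
  simp_rw [ContinuousMap.add_apply, add_mul]
  exact integral_add (cm_integrable_mul u w) (cm_integrable_mul v w)

lemma ip_sub_left (u v w : C(unitInterval, ℝ)) : ip (u - v) w = ip u w - ip v w := by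
  unfold ip
  simp_rw [ContinuousMap.sub_apply, sub_mul]
  exact integral_sub (cm_integrable_mul u w) (cm_integrable_mul v w)

lemma ip_smul_left (c : ℝ) (u v : C(unitInterval, ℝ)) : ip (c • u) v = c * ip u v := by
  unfold ip
  simp_rw [ContinuousMap.smul_apply, smul_eq_mul, mul_assoc]
  exact integral_const_mul c _

lemma ip_add_right (u v w : C(unitInterval, ℝ)) : ip u (v + w) = ip u v + ip u w := by
  rw [ip_comm, ip_add_left, ip_comm v u, ip_comm w u]

lemma ip_sub_right (u v w : C(unitInterval, ℝ)) : ip u (v - w) = ip u v - ip u w := by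
  rw [ip_comm, ip_sub_left, ip_comm v u, ip_comm w u]

lemma ip_smul_right (c : ℝ) (u v : C(unitInterval, ℝ)) : ip u (c • v) = c * ip u v := by
  rw [ip_comm, ip_smul_left, ip_comm v u]

lemma ip_self_nonneg (u : C(unitInterval, ℝ)) : 0 ≤ ip u u :=
  integral_nonneg fun t => mul_self_nonneg _

lemma eq_zero_of_ip_self_eq_zero {u : C(unitInterval, ℝ)} (h : ip u u = 0) : u = 0 := by
  by_contra hu
  obtain ⟨t₀, ht₀⟩ : ∃ t₀, u t₀ ≠ 0 := by
    by_contra h'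
    push_neg at h'
    exact hu (ContinuousMap.ext fun t => h' t)
  have : 0 < ip u u := by
    have := integral_pos_of_pos_at (f := u * u)
      (fun t => by simpa using mul_self_nonneg (u t))
      (t₀ := t₀) (by simpa using (mul_self_pos).2 ht₀)
    simpa [ip] using this
  exact this.ne' h

lemma ip_cauchy_schwarz (u v : C(unitInterval, ℝ)) : (ip u v)^2 ≤ ip u u * ip v v := by
  set A := ip u u with hA
  set B := ip u v with hB
  set C := ip v v with hC
  rcases eq_or_lt_of_le (ip_self_nonneg v) with h0 | hpos
  · have hv : v = 0 := eq_zero_of_ip_self_eq_zero h0.symm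
    have hB0 : B = 0 := by rw [hB, hv]; unfold ip; simp
    have hC0 : C = 0 := h0.symm
    rw [hB0, hC0]; simp
  · have key : 0 ≤ ip (C • u - B • v) (C • u - B • v) := ip_self_nonneg _
    simp only [ip_sub_left, ip_sub_right, ip_smul_left, ip_smul_right, ip_comm v u] at key
    rw [← hA, ← hB, ← hC] at key
    nlinarith

lemma cont_integrable {f : unitInterval → ℝ} (hf : Continuous f) : Integrable f :=
  hf.integrable_of_hasCompactSupport (HasCompactSupport.of_compactSpace f)

lemma ip_abs_le (u v : C(unitInterval, ℝ)) :
    |ip u v| ≤ Real.sqrt (ip u u) * Real.sqrt (ip v v) := by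
  have h := Real.sqrt_le_sqrt (ip_cauchy_schwarz u v)
  rwa [Real.sqrt_sq_eq_abs, Real.sqrt_mul (ip_self_nonneg u)] at h

lemma ip_one_one : ip (1 : C(unitInterval, ℝ)) 1 = 1 := by
  unfold ip
  simp

lemma ip_abs_self (u : C(unitInterval, ℝ)) : ip |u| |u| = ip u u := by
  unfold ip
  congr 1; funext t
  show |u t| * |u t| = u t * u t
  exact abs_mul_abs_self _

lemma ip_zero_left (v : C(unitInterval, ℝ)) : ip 0 v = 0 := by
  unfold ip; simp

lemma ip_zero_right (v : C(unitInterval, ℝ)) : ip v 0 = 0 := by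
  unfold ip; simp

lemma sqrt_inv_unitize {A : ℝ} (hA : 0 < A) :
    (Real.sqrt A)⁻¹ * ((Real.sqrt A)⁻¹ * A) = 1 := by
  have h2 : Real.sqrt A * Real.sqrt A = A := Real.mul_self_sqrt hA.le
  have hr : 0 < Real.sqrt A := Real.sqrt_pos.2 hA
  field_simp
  rw [sq, h2]

open Filter Topology BoundedContinuousFunction

set_option maxHeartbeats 2000000 in
/-- Under condition (H1), the linear Hammerstein operator
`(L u)(t) = ∫₀¹ k(t,s) u(s) ds` has a positive eigenvalue `λ₁ > 0` whose
corresponding eigenfunction `φ₁` is nonnegative and not identically zero. -/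
theorem hammerstein_positive_eigenvalue
    (k : unitInterval → unitInterval → ℝ)
    (hkcont : Continuous (Function.uncurry k))
    (hknonneg : ∀ t s, 0 ≤ k t s)
    (hksymm : ∀ t s, k t s = k s t)
    (L : C(unitInterval, ℝ) →L[ℝ] C(unitInterval, ℝ))
    (hL : ∀ (u : C(unitInterval, ℝ)) (t : unitInterval), L u t = ∫ s, k t s * u s)
    -- (H1)
    (θ : C(unitInterval, ℝ)) (hθnonneg : ∀ t, 0 ≤ θ t)
    (hH1 : ∀ t s q, θ t * k q s ≤ k t s)
    (hLθpos : 0 < ‖L θ‖) :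
    ∃ lam₁ : ℝ, 0 < lam₁ ∧ ∃ φ₁ : C(unitInterval, ℝ),
      (∀ t, 0 ≤ φ₁ t) ∧ φ₁ ≠ 0 ∧ L φ₁ = lam₁ • φ₁ := by
  classical
  -- maximum of the kernel
  obtain ⟨p, -, hp⟩ := isCompact_univ.exists_isMaxOn Set.univ_nonempty hkcont.continuousOn
  set Km : ℝ := k p.1 p.2 with hKmdef
  have hKm : ∀ t s, k t s ≤ Km := fun t s => hp (Set.mem_univ (t, s))
  have hKm0 : 0 ≤ Km := hknonneg _ _
  -- curried kernel
  set K' : C(unitInterval, C(unitInterval, ℝ)) :=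
    (ContinuousMap.mk (Function.uncurry k) hkcont).curry with hK'
  have hK'app : ∀ t s, K' t s = k t s := fun t s => rfl
  -- nonnegativity of L on nonneg functions
  have hLnn : ∀ u : C(unitInterval, ℝ), (∀ s, 0 ≤ u s) → ∀ t, 0 ≤ L u t := by
    intro u hu t; rw [hL]
    exact MeasureTheory.integral_nonneg fun s => mul_nonneg (hknonneg t s) (hu s)
  -- L¹ norm bounded by L² norm
  have hl1 : ∀ u : C(unitInterval, ℝ), ∫ s, |u s| ≤ Real.sqrt (ip u u) := by
    intro u
    have h1 : ∫ s, |u s| = ip |u| 1 := by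
      unfold ip
      congr 1; funext s
      show |u s| = |u s| * 1
      ring
    calc ∫ s, |u s| = ip |u| 1 := h1
      _ ≤ |ip |u| 1| := le_abs_self _
      _ ≤ Real.sqrt (ip |u| |u|) * Real.sqrt (ip 1 1) := ip_abs_le _ _
      _ = Real.sqrt (ip u u) := by rw [ip_abs_self, ip_one_one, Real.sqrt_one, mul_one]
  -- pointwise bound
  have hpt : ∀ (u : C(unitInterval, ℝ)) (t : unitInterval),
      |L u t| ≤ Km * Real.sqrt (ip u u) := by
    intro u t
    have hktc : Continuous (k t) := (K' t).continuous
    rw [hL]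
    calc |∫ s, k t s * u s| ≤ ∫ s, |k t s * u s| := by
          simpa only [Real.norm_eq_abs] using
            MeasureTheory.norm_integral_le_integral_norm (fun s => k t s * u s)
      _ = ∫ s, k t s * |u s| := by
          congr 1; funext s
          rw [abs_mul, abs_of_nonneg (hknonneg t s)]
      _ ≤ ∫ s, Km * |u s| := by
          refine MeasureTheory.integral_mono (cont_integrable (hktc.mul u.continuous.abs))
            (cont_integrable (continuous_const.mul u.continuous.abs)) fun s => ?_
          exact mul_le_mul_of_nonneg_right (hKm t s) (abs_nonneg _)
      _ = Km * ∫ s, |u s| := MeasureTheory.integral_const_mul _ _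
      _ ≤ Km * Real.sqrt (ip u u) := mul_le_mul_of_nonneg_left (hl1 u) hKm0
  -- Lipschitz bound in sup metric
  have hlip : ∀ (u v : C(unitInterval, ℝ)) (t : unitInterval),
      |L u t - L v t| ≤ Km * dist (mkOfCompact u) (mkOfCompact v) := by
    intro u v t
    have hktc : Continuous (k t) := (K' t).continuous
    rw [hL, hL, ← MeasureTheory.integral_sub (cont_integrable (f := fun s => k t s * u s) (hktc.mul u.continuous))
      (cont_integrable (f := fun s => k t s * v s) (hktc.mul v.continuous))]
    calc |∫ s, (k t s * u s - k t s * v s)|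
        ≤ ∫ s, |k t s * u s - k t s * v s| := by
          simpa only [Real.norm_eq_abs] using
            MeasureTheory.norm_integral_le_integral_norm (fun s => k t s * u s - k t s * v s)
      _ ≤ ∫ s, Km * dist (mkOfCompact u) (mkOfCompact v) := by
          refine MeasureTheory.integral_mono
            (cont_integrable ((hktc.mul u.continuous).sub (hktc.mul v.continuous)).abs)
            (MeasureTheory.integrable_const _) fun s => ?_
          have h1 : |k t s * u s - k t s * v s| = k t s * |u s - v s| := by
            rw [← mul_sub, abs_mul, abs_of_nonneg (hknonneg t s)]
          rw [h1]
          have h2 : |u s - v s| ≤ dist (mkOfCompact u) (mkOfCompact v) := by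
            have := BoundedContinuousFunction.dist_coe_le_dist
              (f := mkOfCompact u) (g := mkOfCompact v) s
            rwa [BoundedContinuousFunction.mkOfCompact_apply,
              BoundedContinuousFunction.mkOfCompact_apply, Real.dist_eq] at this
          exact mul_le_mul (hKm t s) h2 (abs_nonneg _) hKm0
      _ = Km * dist (mkOfCompact u) (mkOfCompact v) := by
          rw [MeasureTheory.integral_const]
          simp
  -- symmetry of the form
  have hsym : ∀ u v : C(unitInterval, ℝ), ip (L u) v = ip (L v) u := by
    intro u v
    have hprod : MeasureTheory.Integrable
        (Function.uncurry fun t s => k t s * u s * v t)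
        ((volume : Measure unitInterval).prod volume) := by
      rw [← MeasureTheory.Measure.volume_eq_prod]
      apply Continuous.integrable_of_hasCompactSupport
      · exact (hkcont.mul (u.continuous.comp continuous_snd)).mul
          (v.continuous.comp continuous_fst)
      · exact HasCompactSupport.of_compactSpace _
    have h1 : ip (L u) v = ∫ t, ∫ s, k t s * u s * v t := by
      unfold ip
      congr 1; funext t
      rw [hL, ← MeasureTheory.integral_mul_const]
    have h2 : ip (L v) u = ∫ s, ∫ t, k t s * u s * v t := by
      unfold ip
      congr 1; funext s
      rw [hL, ← MeasureTheory.integral_mul_const]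
      congr 1; funext t
      rw [hksymm]; ring
    rw [h1, h2]
    exact MeasureTheory.integral_integral_swap hprod
  -- the Rayleigh set
  set S : Set ℝ :=
    {r | ∃ u : C(unitInterval, ℝ), (∀ t, 0 ≤ u t) ∧ ip u u = 1 ∧ r = ip (L u) u} with hS
  have hSbdd : BddAbove S := by
    refine ⟨Km, ?_⟩
    rintro r ⟨u, hu1, hu2, rfl⟩
    have hKmb : ∀ t, L u t ≤ Km := fun t => le_trans (le_abs_self _)
      (by simpa [hu2, Real.sqrt_one] using hpt u t)
    have hint1 : ∫ t, u t ≤ 1 := by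
      have h := hl1 u
      rw [hu2, Real.sqrt_one] at h
      calc ∫ t, u t = ∫ t, |u t| := by
            congr 1; funext t; rw [abs_of_nonneg (hu1 t)]
        _ ≤ 1 := h
    calc ip (L u) u = ∫ t, L u t * u t := rfl
      _ ≤ ∫ t, Km * u t := by
          refine MeasureTheory.integral_mono
            (cont_integrable ((L u).continuous.mul u.continuous))
            (cont_integrable (continuous_const.mul u.continuous)) fun t => ?_
          exact mul_le_mul_of_nonneg_right (hKmb t) (hu1 t)
      _ = Km * ∫ t, u t := MeasureTheory.integral_const_mul _ _
      _ ≤ Km * 1 := mul_le_mul_of_nonneg_left hint1 hKm0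
      _ = Km := mul_one _
  -- a positive element of S
  have hθne : ∃ t₀, 0 < θ t₀ := by
    by_contra h
    push_neg at h
    have hθ0 : θ = 0 := ContinuousMap.ext fun t => le_antisymm (h t) (hθnonneg t)
    rw [hθ0] at hLθpos
    simp at hLθpos
  have hθθ : 0 < ip θ θ := by
    obtain ⟨t₀, ht₀⟩ := hθne
    have := integral_pos_of_pos_at (f := θ * θ)
      (fun t => by simpa using mul_self_nonneg (θ t))
      (t₀ := t₀) (by simpa using mul_pos ht₀ ht₀)
    simpa [ip] using this
  set c : ℝ := (Real.sqrt (ip θ θ))⁻¹ with hc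
  have hcpos : 0 < c := inv_pos.2 (Real.sqrt_pos.2 hθθ)
  have hmemS : ip (L (c • θ)) (c • θ) ∈ S := by
    refine ⟨c • θ, fun t => ?_, ?_, rfl⟩
    · exact mul_nonneg hcpos.le (hθnonneg t)
    · simp only [_root_.map_smul, ip_smul_left, ip_smul_right]
      rw [hc]
      exact sqrt_inv_unitize hθθ
  have hQθpos : 0 < ip (L (c • θ)) (c • θ) := by
    have hLθnn : ∀ t, 0 ≤ L θ t := hLnn θ hθnonneg
    have hex : ∃ q₀, L θ q₀ ≠ 0 := by
      by_contra h
      push_neg at h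
      have : L θ = 0 := ContinuousMap.ext h
      rw [this] at hLθpos
      simp at hLθpos
    obtain ⟨q₀, hq₀⟩ := hex
    have hq₀pos : 0 < L θ q₀ := (hLθnn q₀).lt_of_ne (Ne.symm hq₀)
    have hptw : ∀ t, L θ q₀ * (θ t * θ t) ≤ L θ t * θ t := by
      intro t
      have hktc : Continuous (k t) := (K' t).continuous
      have hkq : Continuous (k q₀) := (K' q₀).continuous
      have h1 : θ t * L θ q₀ ≤ L θ t := by
        rw [hL, hL, ← MeasureTheory.integral_const_mul]
        refine MeasureTheory.integral_mono
          (cont_integrable (continuous_const.mul (hkq.mul θ.continuous)))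
          (cont_integrable (hktc.mul θ.continuous)) fun s => ?_
        have h2 := mul_le_mul_of_nonneg_right (hH1 t s q₀) (hθnonneg s)
        calc θ t * (k q₀ s * θ s) = θ t * k q₀ s * θ s := by ring
          _ ≤ k t s * θ s := h2
      calc L θ q₀ * (θ t * θ t) = (θ t * L θ q₀) * θ t := by ring
        _ ≤ L θ t * θ t := mul_le_mul_of_nonneg_right h1 (hθnonneg t)
    have hmain : L θ q₀ * ip θ θ ≤ ip (L θ) θ := by
      unfold ip
      rw [← MeasureTheory.integral_const_mul]
      exact MeasureTheory.integral_mono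
        (cont_integrable (continuous_const.mul (θ.continuous.mul θ.continuous)))
        (cont_integrable ((L θ).continuous.mul θ.continuous)) hptw
    have h1 : 0 < ip (L θ) θ := lt_of_lt_of_le (mul_pos hq₀pos hθθ) hmain
    simp only [_root_.map_smul, ip_smul_left, ip_smul_right]
    exact mul_pos hcpos (mul_pos hcpos h1)
  set M : ℝ := sSup S with hM
  have hMpos : 0 < M := lt_of_lt_of_le hQθpos (le_csSup hSbdd hmemS)
  -- quadratic bound
  have hquad : ∀ w : C(unitInterval, ℝ), |ip (L w) w| ≤ M * ip w w := by
    intro w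
    have hLabsnn : ∀ t, 0 ≤ L |w| t := hLnn |w| (fun s => abs_nonneg _)
    have h1 : ∀ t, |L w t| ≤ L |w| t := by
      intro t
      have hktc : Continuous (k t) := (K' t).continuous
      rw [hL, hL]
      calc |∫ s, k t s * w s| ≤ ∫ s, |k t s * w s| := by
            simpa only [Real.norm_eq_abs] using
              MeasureTheory.norm_integral_le_integral_norm (fun s => k t s * w s)
        _ = ∫ s, k t s * |w| s := by
            congr 1; funext s
            rw [abs_mul, abs_of_nonneg (hknonneg t s)]
            rfl
    have habs : |ip (L w) w| ≤ ip (L |w|) |w| := by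
      calc |ip (L w) w| = |∫ t, L w t * w t| := rfl
        _ ≤ ∫ t, |L w t * w t| := by
            simpa only [Real.norm_eq_abs] using
              MeasureTheory.norm_integral_le_integral_norm (fun t => L w t * w t)
        _ ≤ ∫ t, L |w| t * |w| t := by
            refine MeasureTheory.integral_mono
              (cont_integrable ((L w).continuous.mul w.continuous).abs)
              (cont_integrable ((L |w|).continuous.mul (|w|).continuous)) fun t => ?_
            rw [abs_mul]
            exact mul_le_mul_of_nonneg_right (h1 t) (abs_nonneg _)
        _ = ip (L |w|) |w| := rfl
    refine le_trans habs ?_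
    rcases eq_or_lt_of_le (ip_self_nonneg w) with h0 | hposw
    · have hw : w = 0 := eq_zero_of_ip_self_eq_zero h0.symm
      rw [hw]
      show ip (L |(0 : C(unitInterval, ℝ))|) |(0 : C(unitInterval, ℝ))| ≤ _
      rw [abs_zero, _root_.map_zero, ip_zero_left]
      simp
    · set d : ℝ := (Real.sqrt (ip w w))⁻¹ with hd
      have hdpos : 0 < d := inv_pos.2 (Real.sqrt_pos.2 hposw)
      have hunit : ip (d • |w|) (d • |w|) = 1 := by
        rw [ip_smul_left, ip_smul_right, ip_abs_self]
        exact sqrt_inv_unitize hposw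
      have hmem : ip (L (d • |w|)) (d • |w|) ∈ S :=
        ⟨d • |w|, fun t => mul_nonneg hdpos.le (abs_nonneg _), hunit, rfl⟩
      have hle := le_csSup hSbdd hmem
      rw [_root_.map_smul, ip_smul_left, ip_smul_right] at hle
      -- d * (d * ip (L |w|) |w|) ≤ M
      have hd2 : d * d * ip w w = 1 := by
        rw [hd]; rw [mul_assoc]; exact sqrt_inv_unitize hposw
      have h5 : ip w w * (d * (d * ip (L |w|) |w|)) ≤ ip w w * M :=
        mul_le_mul_of_nonneg_left hle (ip_self_nonneg w)
      have h6 : ip w w * (d * (d * ip (L |w|) |w|))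
          = (d * d * ip w w) * ip (L |w|) |w| := by ring
      rw [h6, hd2, one_mul] at h5
      linarith
  -- bilinear bound
  have hbil : ∀ u v : C(unitInterval, ℝ),
      |ip (L u) v| ≤ M * Real.sqrt (ip u u) * Real.sqrt (ip v v) := by
    have key : ∀ u' v' : C(unitInterval, ℝ),
        4 * |ip (L u') v'| ≤ 2 * M * (ip u' u' + ip v' v') := by
      intro u' v'
      have hpol : ip (L (u' + v')) (u' + v') - ip (L (u' - v')) (u' - v')
          = 4 * ip (L u') v' := by
        simp only [map_add, map_sub, ip_add_left, ip_add_right, ip_sub_left, ip_sub_right]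
        rw [hsym v' u']
        ring
      have h1 := hquad (u' + v')
      have h2 := hquad (u' - v')
      have hexp : ip (u' + v') (u' + v') + ip (u' - v') (u' - v')
          = 2 * (ip u' u' + ip v' v') := by
        simp only [ip_add_left, ip_add_right, ip_sub_left, ip_sub_right]
        ring
      have htri : |4 * ip (L u') v'|
          ≤ |ip (L (u' + v')) (u' + v')| + |ip (L (u' - v')) (u' - v')| := by
        rw [← hpol]
        exact abs_sub _ _
      rw [abs_mul] at htri
      have h4 : |(4 : ℝ)| = 4 := by norm_num
      rw [h4] at htri
      nlinarith [htri, h1, h2, hexp]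
    intro u v
    rcases eq_or_lt_of_le (ip_self_nonneg u) with h0u | hu
    · have : u = 0 := eq_zero_of_ip_self_eq_zero h0u.symm
      rw [this, _root_.map_zero, ip_zero_left, ip_zero_right, Real.sqrt_zero]
      simp
    rcases eq_or_lt_of_le (ip_self_nonneg v) with h0v | hv
    · have : v = 0 := eq_zero_of_ip_self_eq_zero h0v.symm
      rw [this, ip_zero_right]
      rw [abs_zero]
      exact mul_nonneg (mul_nonneg hMpos.le (Real.sqrt_nonneg _)) (Real.sqrt_nonneg _)
    set a : ℝ := Real.sqrt (ip u u) with ha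
    set b : ℝ := Real.sqrt (ip v v) with hb
    have hapos : 0 < a := Real.sqrt_pos.2 hu
    have hbpos : 0 < b := Real.sqrt_pos.2 hv
    have haa : a * a = ip u u := Real.mul_self_sqrt (ip_self_nonneg u)
    have hbb : b * b = ip v v := Real.mul_self_sqrt (ip_self_nonneg v)
    set c : ℝ := Real.sqrt (b / a) with hc2
    have hcpos' : 0 < c := Real.sqrt_pos.2 (div_pos hbpos hapos)
    have hcc : c * c = b / a := Real.mul_self_sqrt (div_pos hbpos hapos).le
    have hkey := key (c • u) (c⁻¹ • v)
    rw [_root_.map_smul, ip_smul_left, ip_smul_right, ip_smul_left, ip_smul_right,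
      ip_smul_left, ip_smul_right] at hkey
    -- simplify ip (c•L u) (c⁻¹ • v) = c * (c⁻¹ * ip (L u) v)
    have hc1 : c * (c⁻¹ * ip (L u) v) = ip (L u) v := by
      field_simp
    rw [hc1] at hkey
    have e1 : c * (c * ip u u) = a * b := by
      rw [← haa]
      calc c * (c * (a * a)) = (c * c) * (a * a) := by ring
        _ = (b / a) * (a * a) := by rw [hcc]
        _ = a * b := by field_simp
    have e2 : c⁻¹ * (c⁻¹ * ip v v) = a * b := by
      rw [← hbb]
      have hci : c⁻¹ * c⁻¹ = a / b := by
        rw [← mul_inv, hcc]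
        rw [inv_div]
      calc c⁻¹ * (c⁻¹ * (b * b)) = (c⁻¹ * c⁻¹) * (b * b) := by ring
        _ = (a / b) * (b * b) := by rw [hci]
        _ = a * b := by field_simp
    rw [e1, e2] at hkey
    have : 2 * M * (a * b + a * b) = 4 * (M * a * b) := by ring
    rw [this] at hkey
    linarith
  -- operator bound
  have hopb : ∀ u : C(unitInterval, ℝ), ip (L u) (L u) ≤ M ^ 2 * ip u u := by
    intro u
    have h := hbil u (L u)
    set d : ℝ := Real.sqrt (ip (L u) (L u)) with hd
    set a : ℝ := Real.sqrt (ip u u) with ha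
    have hd0 : 0 ≤ d := Real.sqrt_nonneg _
    have ha0 : 0 ≤ a := Real.sqrt_nonneg _
    have hdd : d * d = ip (L u) (L u) := Real.mul_self_sqrt (ip_self_nonneg _)
    have haa : a * a = ip u u := Real.mul_self_sqrt (ip_self_nonneg _)
    have h' : d * d ≤ M * a * d := by
      rw [hdd]; exact le_trans (le_abs_self _) h
    rw [← hdd, ← haa]
    have hsq : 0 ≤ (M * a - d) * (M * a - d) := mul_self_nonneg _
    have : d * d ≤ M ^ 2 * (a * a) := by nlinarith [h', hsq, hd0, ha0, hMpos.le]
    linarith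
  -- maximizing sequence
  have hseq : ∀ n : ℕ, ∃ u : C(unitInterval, ℝ),
      (∀ t, 0 ≤ u t) ∧ ip u u = 1 ∧ M - 1 / (n + 1) < ip (L u) u := by
    intro n
    obtain ⟨r, hrS, hrlt⟩ := exists_lt_of_lt_csSup ⟨_, hmemS⟩
      (show M - 1 / (n + 1 : ℝ) < M by
        have : 0 < 1 / (n + 1 : ℝ) := by positivity
        linarith)
    obtain ⟨u, hu1, hu2, rfl⟩ := hrS
    exact ⟨u, hu1, hu2, hrlt⟩
  choose x hx1 hx2 hx3 using hseq
  set Q : ℕ → ℝ := fun n => ip (L (x n)) (x n) with hQ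
  have hQle : ∀ n, Q n ≤ M := fun n => le_csSup hSbdd ⟨x n, hx1 n, hx2 n, rfl⟩
  have hQtend : Tendsto Q atTop (𝓝 M) := by
    have hlow : Tendsto (fun n : ℕ => M - 1 / (n + 1 : ℝ)) atTop (𝓝 M) := by
      have h0 : Tendsto (fun n : ℕ => 1 / (n + 1 : ℝ)) atTop (𝓝 0) :=
        tendsto_one_div_add_atTop_nhds_zero_nat
      have h1 := (tendsto_const_nhds (x := M) (f := atTop)).sub h0
      simpa using h1
    refine tendsto_of_tendsto_of_tendsto_of_le_of_le hlow tendsto_const_nhds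
      (fun n => (hx3 n).le) hQle
  set E : ℕ → ℝ := fun n => ip (L (x n) - M • x n) (L (x n) - M • x n) with hE
  have hE0 : ∀ n, 0 ≤ E n := fun n => ip_self_nonneg _
  have hEbound : ∀ n, E n ≤ 2 * M ^ 2 - 2 * M * Q n := by
    intro n
    have hexp : E n = ip (L (x n)) (L (x n)) - 2 * M * Q n + M ^ 2 * ip (x n) (x n) := by
      simp only [hE, ip_sub_left, ip_sub_right, ip_smul_left, ip_smul_right, hQ]
      rw [ip_comm (x n) (L (x n))]
      ring
    have h1 := hopb (x n)
    rw [hx2 n] at h1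
    rw [hexp, hx2 n]
    linarith
  have hEtend : Tendsto E atTop (𝓝 0) := by
    have hup : Tendsto (fun n => 2 * M ^ 2 - 2 * M * Q n) atTop (𝓝 (2 * M ^ 2 - 2 * M * M)) :=
      tendsto_const_nhds.sub (hQtend.const_mul (2 * M))
    rw [show 2 * M ^ 2 - 2 * M * M = 0 by ring] at hup
    exact squeeze_zero hE0 hEbound hup
  -- compactness via Arzelà–Ascoli
  set G : ℕ → (unitInterval →ᵇ ℝ) := fun n => mkOfCompact (L (x n)) with hG
  have hxint1 : ∀ n, ∫ s, x n s ≤ 1 := by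
    intro n
    have h := hl1 (x n)
    rw [hx2 n, Real.sqrt_one] at h
    calc ∫ s, x n s = ∫ s, |x n s| := by
          congr 1; funext s; rw [abs_of_nonneg (hx1 n s)]
      _ ≤ 1 := h
  have hmod : ∀ (n : ℕ) (t t' : unitInterval),
      |L (x n) t - L (x n) t'| ≤ dist (K' t) (K' t') := by
    intro n t t'
    have hktc : Continuous (k t) := (K' t).continuous
    have hktc' : Continuous (k t') := (K' t').continuous
    rw [hL, hL, ← MeasureTheory.integral_sub (cont_integrable (f := fun s => k t s * x n s) (hktc.mul (x n).continuous))
      (cont_integrable (f := fun s => k t' s * x n s) (hktc'.mul (x n).continuous))]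
    calc |∫ s, (k t s * x n s - k t' s * x n s)|
        ≤ ∫ s, |k t s * x n s - k t' s * x n s| := by
          simpa only [Real.norm_eq_abs] using
            MeasureTheory.norm_integral_le_integral_norm
              (fun s => k t s * x n s - k t' s * x n s)
      _ ≤ ∫ s, dist (K' t) (K' t') * x n s := by
          refine MeasureTheory.integral_mono
            (cont_integrable ((hktc.mul (x n).continuous).sub
              (hktc'.mul (x n).continuous)).abs)
            (cont_integrable (continuous_const.mul (x n).continuous)) fun s => ?_
          have h1 : |k t s * x n s - k t' s * x n s| = |k t s - k t' s| * x n s := by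
            rw [← sub_mul, abs_mul, abs_of_nonneg (hx1 n s)]
          rw [h1]
          have h2 : |k t s - k t' s| ≤ dist (K' t) (K' t') := by
            have := ContinuousMap.dist_apply_le_dist (f := K' t) (g := K' t') s
            rwa [Real.dist_eq] at this
          exact mul_le_mul_of_nonneg_right h2 (hx1 n s)
      _ = dist (K' t) (K' t') * ∫ s, x n s := MeasureTheory.integral_const_mul _ _
      _ ≤ dist (K' t) (K' t') * 1 := mul_le_mul_of_nonneg_left (hxint1 n) dist_nonneg
      _ = dist (K' t) (K' t') := mul_one _
  have hcomp : IsCompact (closure (Set.range G)) := by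
    refine BoundedContinuousFunction.arzela_ascoli (Set.Icc (-Km) Km) isCompact_Icc
      (Set.range G) ?_ ?_
    · rintro f t ⟨n, rfl⟩
      have h := hpt (x n) t
      rw [hx2 n, Real.sqrt_one, mul_one] at h
      exact Set.mem_Icc.2 (abs_le.1 h)
    · intro t₀
      rw [Metric.equicontinuousAt_iff_right]
      intro ε hε
      have hcont : Tendsto (fun t => dist (K' t) (K' t₀)) (𝓝 t₀) (𝓝 0) := by
        have h := (map_continuous K').tendsto t₀
        rwa [tendsto_iff_dist_tendsto_zero] at h
      have hev : ∀ᶠ t in 𝓝 t₀, dist (K' t) (K' t₀) < ε :=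
        hcont.eventually_lt_const hε
      filter_upwards [hev] with t ht
      rintro ⟨f, n, rfl⟩
      show dist (G n t₀) (G n t) < ε
      calc dist (G n t₀) (G n t) = |L (x n) t₀ - L (x n) t| := Real.dist_eq _ _
        _ ≤ dist (K' t₀) (K' t) := hmod n t₀ t
        _ < ε := by rwa [dist_comm]
  obtain ⟨a, -, φ, hφmono, hφtend⟩ :=
    hcomp.tendsto_subseq (fun n => subset_closure ⟨n, rfl⟩)
  set g : C(unitInterval, ℝ) := a.toContinuousMap with hg
  have hga : mkOfCompact g = a := rfl
  have hdist : Tendsto (fun i => dist (G (φ i)) a) atTop (𝓝 0) := by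
    rwa [tendsto_iff_dist_tendsto_zero] at hφtend
  have hGtt : ∀ t : unitInterval, Tendsto (fun i => G (φ i) t) atTop (𝓝 (a t)) := by
    intro t
    rw [tendsto_iff_dist_tendsto_zero]
    exact squeeze_zero (fun i => dist_nonneg)
      (fun i => BoundedContinuousFunction.dist_coe_le_dist t) hdist
  have hEφ : Tendsto (fun i => E (φ i)) atTop (𝓝 0) := hEtend.comp hφmono.tendsto_atTop
  have hsqrtE : Tendsto (fun i => Real.sqrt (E (φ i))) atTop (𝓝 0) := by
    have h := (Real.continuous_sqrt.tendsto 0).comp hEφ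
    simpa [Real.sqrt_zero, Function.comp_def] using h
  -- the eigenvalue equation
  have heig : ∀ t, L g t = M * g t := by
    intro t
    have h1 : Tendsto (fun i => L (L (x (φ i))) t) atTop (𝓝 (L g t)) := by
      rw [tendsto_iff_dist_tendsto_zero]
      have hb : Tendsto (fun i => Km * dist (G (φ i)) a) atTop (𝓝 0) := by
        have h := hdist.const_mul Km
        simpa using h
      refine squeeze_zero (fun i => dist_nonneg) (fun i => ?_) hb
      rw [Real.dist_eq]
      exact hlip (L (x (φ i))) g t
    have h2 : Tendsto (fun i => L (L (x (φ i))) t - M * L (x (φ i)) t) atTop (𝓝 0) := by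
      refine squeeze_zero_norm (fun i => ?_) (by simpa using hsqrtE.const_mul Km)
      rw [Real.norm_eq_abs]
      have hw := hpt (L (x (φ i)) - M • x (φ i)) t
      have heq : L (L (x (φ i)) - M • x (φ i)) t
          = L (L (x (φ i))) t - M * L (x (φ i)) t := by
        rw [map_sub, _root_.map_smul]
        simp
      rw [heq] at hw
      exact hw
    have h3 : Tendsto (fun i => M * L (x (φ i)) t) atTop (𝓝 (M * g t)) :=
      (hGtt t).const_mul M
    have h4 := h2.add h3
    rw [zero_add] at h4
    have h5 : (fun i => (L (L (x (φ i))) t - M * L (x (φ i)) t) + M * L (x (φ i)) t)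
        = fun i => L (L (x (φ i))) t := by funext i; ring
    rw [h5] at h4
    exact tendsto_nhds_unique h1 h4
  -- nonnegativity of g
  have hgnn : ∀ t, 0 ≤ g t := by
    intro t
    exact ge_of_tendsto' (hGtt t) fun i => hLnn (x (φ i)) (hx1 _) t
  -- g is nonzero
  have hgne : g ≠ 0 := by
    intro h0
    have ha0 : a = 0 := by
      rw [← hga, h0]
      ext t
      simp
    have hQb : ∀ i, Q (φ i) ≤ dist (G (φ i)) a := by
      intro i
      have hptw : ∀ s, L (x (φ i)) s * x (φ i) s ≤ dist (G (φ i)) a * x (φ i) s := by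
        intro s
        refine mul_le_mul_of_nonneg_right ?_ (hx1 _ s)
        have h1 : |G (φ i) s - a s| ≤ dist (G (φ i)) a := by
          have h := BoundedContinuousFunction.dist_coe_le_dist (f := G (φ i)) (g := a) s
          rwa [Real.dist_eq] at h
        have h2 : a s = 0 := by rw [ha0]; rfl
        rw [h2, sub_zero] at h1
        exact le_trans (le_abs_self _) h1
      calc Q (φ i) ≤ ∫ s, dist (G (φ i)) a * x (φ i) s := by
            refine MeasureTheory.integral_mono
              (cont_integrable ((L (x (φ i))).continuous.mul (x (φ i)).continuous))
              (cont_integrable (continuous_const.mul (x (φ i)).continuous)) hptw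
        _ = dist (G (φ i)) a * ∫ s, x (φ i) s := MeasureTheory.integral_const_mul _ _
        _ ≤ dist (G (φ i)) a * 1 := mul_le_mul_of_nonneg_left (hxint1 _) dist_nonneg
        _ = dist (G (φ i)) a := mul_one _
    have hQφ : Tendsto (fun i => Q (φ i)) atTop (𝓝 M) := hQtend.comp hφmono.tendsto_atTop
    have hM0 : M ≤ 0 := le_of_tendsto_of_tendsto' hQφ hdist hQb
    exact absurd hM0 (not_le.2 hMpos)
  exact ⟨M, hMpos, g, hgnn, hgne, ContinuousMap.ext fun t => by
    rw [heig t]; simp⟩
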